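/- Given p̂ ∈ (π₁, π₀), there exist φ(p̂) > 0 and m(p̂) ∈ (0,1) satisfying simultaneously: (i) m(p̂)·p̂Λ·z(p̂) = -φ(p̂)·f(p̂,1); and (ii) 1 - m(p̂) = φ(p̂)·∫_{p̂}^{1} exp(∫_{p̂}^{p} r(s)ds) dp, where r(s) = -(sΛ + f'(s,1))/f(s,1). -/

import Mathlib

open Set intervalIntegral

/-- Given `p̂ ∈ (π₁, π₀)`, there exist `φ(p̂) > 0` and `m(p̂) ∈ (0,1)` with
(i) `m(p̂)·p̂Λ·z(p̂) = -φ(p̂)·f(p̂,1)`; and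
(ii) `1 - m(p̂) = φ(p̂)·∫_{p̂}^{1} exp(∫_{p̂}^{p} r(s)ds) dp`, where
`r(s) = -(sΛ + f'(s,1))/f(s,1)`. -/
theorem stmt_16 (ρL ρH Λ π₁ phat : ℝ) (hρL : 0 < ρL) (hρH : 0 < ρH) (hΛ : 0 < Λ)
    (hπ₁ : π₁ ∈ Ioo (0:ℝ) (ρL / (ρL + ρH)))
    (hroot : ρL * (1 - π₁) - ρH * π₁ - π₁ * (1 - π₁) * Λ = 0)
    (hneg : ∀ p : ℝ, π₁ < p → p ≤ 1 → ρL * (1 - p) - ρH * p - p * (1 - p) * Λ < 0)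
    (hphat : phat ∈ Ioo π₁ (ρL / (ρL + ρH))) :
    ∃ φ0 > (0:ℝ), ∃ m ∈ Ioo (0:ℝ) 1,
      m * (phat * Λ * ((ρL * (1 - phat) - ρH * phat) / (phat * (1 - phat) * Λ))) =
        -φ0 * (ρL * (1 - phat) - ρH * phat - phat * (1 - phat) * Λ) ∧
      1 - m = φ0 * ∫ p in phat..(1:ℝ), Real.exp (∫ s in phat..p,
        -(s * Λ + (-(ρL + ρH) - (1 - 2 * s) * Λ)) /
          (ρL * (1 - s) - ρH * s - s * (1 - s) * Λ)) := by
  obtain ⟨hπ₁pos, hπ₁lt⟩ := hπ₁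
  obtain ⟨hp1, hp2⟩ := hphat
  have hsum : 0 < ρL + ρH := by linarith
  have hπ₀lt1 : ρL / (ρL + ρH) < 1 := by
    rw [div_lt_one hsum]; linarith
  have hphat0 : 0 < phat := lt_trans hπ₁pos hp1
  have hphat1 : phat < 1 := lt_trans hp2 hπ₀lt1
  have h1p : 0 < 1 - phat := by linarith
  have hN : 0 < ρL * (1 - phat) - ρH * phat := by
    nlinarith [(lt_div_iff₀ hsum).mp hp2]
  have hfneg : ∀ s ∈ Icc phat 1, ρL * (1 - s) - ρH * s - s * (1 - s) * Λ < 0 := by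
    intro s hs
    exact hneg s (lt_of_lt_of_le hp1 hs.1) hs.2
  set r : ℝ → ℝ := fun s => -(s * Λ + (-(ρL + ρH) - (1 - 2 * s) * Λ)) /
          (ρL * (1 - s) - ρH * s - s * (1 - s) * Λ) with hr
  have huIcc : uIcc phat 1 = Icc phat 1 := uIcc_of_le hphat1.le
  have hrcont : ContinuousOn r (Icc phat 1) := by
    apply ContinuousOn.div (by fun_prop) (by fun_prop)
    intro s hs; exact ne_of_lt (hfneg s hs)
  have hrintOn : MeasureTheory.IntegrableOn r (uIcc phat 1) MeasureTheory.volume := by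
    rw [huIcc]
    exact hrcont.integrableOn_Icc
  have hFcont : ContinuousOn (fun p => ∫ s in phat..p, r s) (Icc phat 1) := by
    have := intervalIntegral.continuousOn_primitive_interval hrintOn
    rwa [huIcc] at this
  set g : ℝ → ℝ := fun p => Real.exp (∫ s in phat..p, r s) with hg
  have hgcont : ContinuousOn g (Icc phat 1) := Real.continuous_exp.comp_continuousOn hFcont
  have hgint : IntervalIntegrable g MeasureTheory.volume phat 1 := by
    apply ContinuousOn.intervalIntegrable
    rwa [huIcc]
  set I : ℝ := ∫ p in phat..(1:ℝ), g p with hI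
  have hIpos : 0 < I :=
    intervalIntegral.intervalIntegral_pos_of_pos_on hgint
      (fun x _ => Real.exp_pos _) hphat1
  set a : ℝ := phat * Λ * ((ρL * (1 - phat) - ρH * phat) / (phat * (1 - phat) * Λ)) with ha'
  have ha : 0 < a := mul_pos (mul_pos hphat0 hΛ) (div_pos hN (by positivity))
  set B : ℝ := -(ρL * (1 - phat) - ρH * phat - phat * (1 - phat) * Λ) with hB'
  have hB : 0 < B := by
    have := hfneg phat ⟨le_refl _, hphat1.le⟩
    simp only [hB']; linarith
  set K : ℝ := a * I + B with hK'
  have hK : 0 < K := by positivity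
  refine ⟨a / K, div_pos ha hK, B / K, ⟨div_pos hB hK, ?_⟩, ?_, ?_⟩
  · rw [div_lt_one hK]
    nlinarith [mul_pos ha hIpos]
  · have : ρL * (1 - phat) - ρH * phat - phat * (1 - phat) * Λ = -B := by
      rw [hB']; ring
    rw [this]
    field_simp
  · field_simp
    ring
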